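/- Let A be a C*-algebra, K a closed essential ideal, and S a closed semiregular operator on A such that (S|_K)** = S|_K. Then S** is the maximal closed semiregular operator on A whose restriction to K equals S|_K: any semiregular T on A with T|_K = S|_K satisfies T ⊆ S**, and (S**)|_K = S|_K. -/

import Mathlib

/-- A densely defined operator on a C*-algebra `A`, presented by a total function `toFun`
whose meaningful values are those on its domain `dom`.  The domain is a dense right ideal,
on which the operator is `ℂ`-linear and right `A`-linear (`S(a b) = (S a) b`). -/
structure UnboundedOp (A : Type*) [NonUnitalCStarAlgebra A] where
  dom : Set A
  toFun : A → A
  dense_dom : Dense dom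
  zero_mem : (0 : A) ∈ dom
  add_mem : ∀ a ∈ dom, ∀ b ∈ dom, a + b ∈ dom
  smul_mem : ∀ (c : ℂ), ∀ a ∈ dom, c • a ∈ dom
  mul_mem : ∀ a ∈ dom, ∀ x : A, a * x ∈ dom
  map_add' : ∀ a ∈ dom, ∀ b ∈ dom, toFun (a + b) = toFun a + toFun b
  map_smul' : ∀ (c : ℂ), ∀ a ∈ dom, toFun (c • a) = c • toFun a
  map_mul' : ∀ a ∈ dom, ∀ x : A, toFun (a * x) = toFun a * x

namespace UnboundedOp

variable {A : Type*} [NonUnitalCStarAlgebra A]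

/-- The domain of the adjoint of `S`, with respect to the `A`-valued inner
product `⟨a, b⟩ = a* b` on `A`: those `a` admitting `c` with `⟨c, b⟩ = ⟨a, S b⟩`
for all `b` in the domain of `S`. -/
def adjDom (S : UnboundedOp A) : Set A :=
  {a : A | ∃ c : A, ∀ b ∈ S.dom, star a * S.toFun b = star c * b}

/-- `S` is semiregular if (it is closable, which is automatic here, and) its
adjoint is densely defined. -/
def Semiregular (S : UnboundedOp A) : Prop := Dense S.adjDom

/-- `S` is a closed operator if its graph is closed. -/
def IsClosedOp (S : UnboundedOp A) : Prop :=
  IsClosed {p : A × A | p.1 ∈ S.dom ∧ p.2 = S.toFun p.1}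

end UnboundedOp

/-- An ideal `K` of `A` is essential if it has trivial annihilator. -/
def TwoSidedIdeal.Essential {A : Type*} [NonUnitalCStarAlgebra A] (K : TwoSidedIdeal A) : Prop :=
  ∀ a : A, (∀ k ∈ K, a * k = 0) → a = 0

namespace UnboundedOp

variable {A : Type*} [NonUnitalCStarAlgebra A]

open Classical in
/-- The value of the adjoint `S*` at `a` (junk value `0` off the adjoint domain). -/
noncomputable def adjFun (S : UnboundedOp A) (a : A) : A :=
  if h : ∃ c : A, ∀ b ∈ S.dom, star a * S.toFun b = star c * b then h.choose else 0

/-- The domain of the double adjoint `S**`. -/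
def adjDom2 (S : UnboundedOp A) : Set A :=
  {a : A | ∃ c : A, ∀ b ∈ S.adjDom, star a * S.adjFun b = star c * b}

open Classical in
/-- The value of the double adjoint `S**` at `a`. -/
noncomputable def adjFun2 (S : UnboundedOp A) (a : A) : A :=
  if h : ∃ c : A, ∀ b ∈ S.adjDom, star a * S.adjFun b = star c * b then h.choose else 0

/-- The domain of the adjoint of the restriction `S|_K`, computed relative to `K`. -/
def adjDomRes (S : UnboundedOp A) (K : Set A) : Set A :=
  {a : A | a ∈ K ∧ ∃ c ∈ K, ∀ b ∈ S.dom ∩ K, star a * S.toFun b = star c * b}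

open Classical in
/-- The value of the adjoint of the restriction `S|_K` at `a`, relative to `K`. -/
noncomputable def adjFunRes (S : UnboundedOp A) (K : Set A) (a : A) : A :=
  if h : ∃ c ∈ K, ∀ b ∈ S.dom ∩ K, star a * S.toFun b = star c * b then h.choose else 0

/-- The domain of the double adjoint `(S|_K)**`, computed relative to `K`. -/
def adjDomRes2 (S : UnboundedOp A) (K : Set A) : Set A :=
  {a : A | a ∈ K ∧ ∃ c ∈ K, ∀ b ∈ S.adjDomRes K, star a * S.adjFunRes K b = star c * b}

open Classical in
/-- The value of the double adjoint `(S|_K)**` at `a`, relative to `K`. -/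
noncomputable def adjFunRes2 (S : UnboundedOp A) (K : Set A) (a : A) : A :=
  if h : ∃ c ∈ K, ∀ b ∈ S.adjDomRes K, star a * S.adjFunRes K b = star c * b then
    h.choose else 0

end UnboundedOp


section Aux
open UnboundedOp
variable {A : Type*} [NonUnitalCStarAlgebra A]

lemma aux_sep_of_dense {D : Set A} (hD : Dense D) {x : A}
    (hx : ∀ d ∈ D, star x * d = 0) : x = 0 := by
  have hcont : Continuous fun d : A => star x * d := continuous_const.mul continuous_id
  have hall : (fun d : A => star x * d) = fun _ => (0 : A) :=
    Continuous.ext_on hD hcont continuous_const hx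
  exact (CStarRing.star_mul_self_eq_zero_iff x).mp (congrFun hall x)

namespace UnboundedOp

lemma aux_adjFun_spec (S : UnboundedOp A) {b : A} (hb : b ∈ S.adjDom) :
    ∀ d ∈ S.dom, star b * S.toFun d = star (S.adjFun b) * d := by
  have hb' : ∃ c : A, ∀ d ∈ S.dom, star b * S.toFun d = star c * d := hb
  rw [adjFun, dif_pos hb']
  exact hb'.choose_spec

lemma aux_adjFun2_spec (S : UnboundedOp A) {a : A} (ha : a ∈ S.adjDom2) :
    ∀ b ∈ S.adjDom, star a * S.adjFun b = star (S.adjFun2 a) * b := by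
  have ha' : ∃ c : A, ∀ b ∈ S.adjDom, star a * S.adjFun b = star c * b := ha
  rw [adjFun2, dif_pos ha']
  exact ha'.choose_spec

lemma aux_adjFunRes_spec (S : UnboundedOp A) {K : Set A} {b : A} (hb : b ∈ S.adjDomRes K) :
    S.adjFunRes K b ∈ K ∧
      ∀ d ∈ S.dom ∩ K, star b * S.toFun d = star (S.adjFunRes K b) * d := by
  have hb' : ∃ c ∈ K, ∀ d ∈ S.dom ∩ K, star b * S.toFun d = star c * d := hb.2
  rw [adjFunRes, dif_pos hb']
  exact hb'.choose_spec

lemma aux_adjFunRes2_spec (S : UnboundedOp A) {K : Set A} {a : A} (ha : a ∈ S.adjDomRes2 K) :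
    S.adjFunRes2 K a ∈ K ∧
      ∀ b ∈ S.adjDomRes K, star a * S.adjFunRes K b = star (S.adjFunRes2 K a) * b := by
  have ha' : ∃ c ∈ K, ∀ b ∈ S.adjDomRes K, star a * S.adjFunRes K b = star c * b := ha.2
  rw [adjFunRes2, dif_pos ha']
  exact ha'.choose_spec

end UnboundedOp
end Aux

section Aux2
open UnboundedOp
variable {A : Type*} [NonUnitalCStarAlgebra A]

lemma aux_sepDomK (K : TwoSidedIdeal A) (hKe : K.Essential) (S : UnboundedOp A) {x : A}
    (hx : ∀ d ∈ S.dom ∩ (K : Set A), star x * d = 0) : x = 0 := by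
  refine aux_sep_of_dense S.dense_dom fun d hd => ?_
  refine hKe _ fun k hk => ?_
  have h1 : d * k ∈ S.dom ∩ (K : Set A) := ⟨S.mul_mem d hd k, K.mul_mem_left d k hk⟩
  have := hx _ h1
  rwa [← mul_assoc] at this

lemma aux_res_subset_adjDom (K : TwoSidedIdeal A) (hKe : K.Essential) (S : UnboundedOp A)
    {b : A} (hb : b ∈ S.adjDomRes (K : Set A)) :
    b ∈ S.adjDom ∧ S.adjFun b = S.adjFunRes (K : Set A) b := by
  obtain ⟨hcK, hspec⟩ := S.aux_adjFunRes_spec hb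
  have hfull : ∀ d ∈ S.dom,
      star b * S.toFun d = star (S.adjFunRes (K : Set A) b) * d := by
    intro d hd
    have h0 : star b * S.toFun d - star (S.adjFunRes (K : Set A) b) * d = 0 := by
      refine hKe _ fun k hk => ?_
      have hdk : d * k ∈ S.dom ∩ (K : Set A) := ⟨S.mul_mem d hd k, K.mul_mem_left d k hk⟩
      have h2 := hspec _ hdk
      rw [S.map_mul' d hd k] at h2
      rw [sub_mul, mul_assoc, mul_assoc, h2, sub_self]
    exact sub_eq_zero.mp h0
  have hmem : b ∈ S.adjDom := ⟨S.adjFunRes (K : Set A) b, hfull⟩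
  refine ⟨hmem, ?_⟩
  have h1 := S.aux_adjFun_spec hmem
  have h2 : S.adjFun b - S.adjFunRes (K : Set A) b = 0 := by
    refine aux_sep_of_dense S.dense_dom fun d hd => ?_
    rw [star_sub, sub_mul, ← h1 d hd, ← hfull d hd, sub_self]
  exact sub_eq_zero.mp h2

lemma aux_mul_mem_adjDomRes (K : TwoSidedIdeal A) (S : UnboundedOp A) {b k : A}
    (hb : b ∈ S.adjDom) (hk : k ∈ K) : b * k ∈ S.adjDomRes (K : Set A) := by
  refine ⟨K.mul_mem_left b k hk, S.adjFun b * k, K.mul_mem_left _ k hk, fun d hd => ?_⟩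
  have h1 := S.aux_adjFun_spec hb d hd.1
  rw [star_mul, star_mul, mul_assoc, h1, mul_assoc]

lemma aux_sepRes (K : TwoSidedIdeal A) (hKe : K.Essential) (S : UnboundedOp A)
    (hS : S.Semiregular) {x : A}
    (hx : ∀ b ∈ S.adjDomRes (K : Set A), star x * b = 0) : x = 0 := by
  refine aux_sep_of_dense hS fun b hb => ?_
  refine hKe _ fun k hk => ?_
  have := hx _ (aux_mul_mem_adjDomRes K S hb hk)
  rwa [← mul_assoc] at this

end Aux2


open scoped CStarAlgebra in
lemma aux_real_est {ε t : ℝ} (hε : 0 < ε) (ht : 0 ≤ t) :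
    |(1 - t * (t / (|t| + ε) ^ 2)) * (t * (1 - t * (t / (|t| + ε) ^ 2)))| ≤ 4 * ε := by
  rw [abs_of_nonneg ht]
  have hs : 0 < t + ε := by positivity
  have h1 : 1 - t * (t / (t + ε) ^ 2) = ε * (2 * t + ε) / (t + ε) ^ 2 := by
    field_simp
    ring
  rw [h1]
  rw [abs_of_nonneg (by positivity)]
  have hE : ε * (2 * t + ε) / (t + ε) ^ 2 * (t * (ε * (2 * t + ε) / (t + ε) ^ 2))
      = ε ^ 2 * (2 * t + ε) ^ 2 * t / (t + ε) ^ 4 := by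
    field_simp
  rw [hE, div_le_iff₀ (by positivity)]
  have h3 : (2 * t + ε) ^ 2 ≤ 4 * (t + ε) ^ 2 := by nlinarith [mul_nonneg ht hε.le]
  have h7 : ε * t ≤ (t + ε) ^ 2 := by nlinarith [mul_nonneg ht hε.le]
  calc ε ^ 2 * (2 * t + ε) ^ 2 * t
      ≤ ε ^ 2 * (4 * (t + ε) ^ 2) * t := by
        nlinarith [mul_le_mul_of_nonneg_right (mul_le_mul_of_nonneg_left h3 (sq_nonneg ε)) ht]
    _ = 4 * (ε * t) * (ε * (t + ε) ^ 2) := by ring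
    _ ≤ 4 * ((t + ε) ^ 2) * (ε * (t + ε) ^ 2) := by
        nlinarith [mul_le_mul_of_nonneg_right h7 (show (0:ℝ) ≤ ε * (t + ε) ^ 2 by positivity)]
    _ = 4 * ε * (t + ε) ^ 4 := by ring

open scoped CStarAlgebra in
lemma aux_approx {A : Type*} [NonUnitalCStarAlgebra A] (a c : A) {δ : ℝ} (hδ : 0 < δ) :
    ∃ w : A, ‖a - a * ((star a * a + star c * c) * w)‖ < δ ∧
      ‖c - c * ((star a * a + star c * c) * w)‖ < δ := by
  set ε : ℝ := δ ^ 2 / 8 with hεdef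
  have hε : 0 < ε := by positivity
  set h : A := star a * a + star c * c with hhdef
  have hsa : IsSelfAdjoint h :=
    (IsSelfAdjoint.star_mul_self a).add (IsSelfAdjoint.star_mul_self c)
  set g : ℝ → ℝ := fun t => t / (|t| + ε) ^ 2 with hgdef
  set f : ℝ → ℝ := fun t => t * g t with hfdef
  have hgc : Continuous g := by
    apply Continuous.div continuous_id (by continuity) (fun t => by positivity)
  have hfc : Continuous f := continuous_id.mul hgc
  have hg0 : g 0 = 0 := by simp [hgdef]
  have hf0 : f 0 = 0 := by simp [hfdef, hg0]
  letI := CStarAlgebra.spectralOrder A⁺¹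
  haveI := CStarAlgebra.spectralOrderedRing A⁺¹
  have hH' : ((h : A⁺¹)) = star (a : A⁺¹) * a + star (c : A⁺¹) * c := by
    rw [hhdef]; simp [Unitization.inr_add, Unitization.inr_mul, Unitization.inr_star]
  have hHnn : (0 : A⁺¹) ≤ (h : A⁺¹) :=
    hH' ▸ add_nonneg (star_mul_self_nonneg _) (star_mul_self_nonneg _)
  have hsa' : IsSelfAdjoint ((h : A⁺¹)) := Unitization.isSelfAdjoint_inr.mpr hsa
  have hspec : ∀ t ∈ spectrum ℝ ((h : A⁺¹)), 0 ≤ t := fun t ht =>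
    spectrum_nonneg_of_nonneg hHnn ht
  set x : A := cfcₙ f h with hxdef
  have hxsa : IsSelfAdjoint x := cfcₙ_predicate f h
  have hxcfc : ((x : A⁺¹)) = cfc f ((h : A⁺¹)) := Unitization.real_cfcₙ_eq_cfc_inr h f hf0
  have hfactor : h * cfcₙ g h = x := by
    rw [hxdef, hfdef, cfcₙ_mul (fun t => t) g h (continuousOn_id) (rfl)
      (hgc.continuousOn) hg0]
    congr 1
    exact (cfcₙ_id ℝ h hsa).symm
  have key : ∀ z : A, star (z : A⁺¹) * (z : A⁺¹) ≤ (h : A⁺¹) → ‖z - z * x‖ < δ := by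
    intro z hz
    have hn : ‖z - z * x‖ = ‖(z : A⁺¹) * (1 - (x : A⁺¹))‖ := by
      rw [← Unitization.norm_inr (𝕜 := ℂ) (z - z * x)]
      congr 1
      simp [Unitization.inr_sub, Unitization.inr_mul, mul_one_sub]
    set u : A⁺¹ := (z : A⁺¹) * (1 - (x : A⁺¹)) with hu
    have hxsa' : IsSelfAdjoint ((x : A⁺¹)) := Unitization.isSelfAdjoint_inr.mpr hxsa
    have h1sa : IsSelfAdjoint ((1 : A⁺¹) - x) := (IsSelfAdjoint.one (A⁺¹)).sub hxsa'
    have hsq : ‖u‖ ^ 2 = ‖star u * u‖ := by rw [CStarRing.norm_star_mul_self, sq]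
    have hconj : star u * u
        = star ((1 : A⁺¹) - x) * (star (z : A⁺¹) * z) * ((1 : A⁺¹) - x) := by
      simp only [hu, star_mul, mul_assoc]
    have hle := star_left_conjugate_le_conjugate hz ((1 : A⁺¹) - x)
    have hnn := star_left_conjugate_nonneg (star_mul_self_nonneg (z : A⁺¹)) ((1 : A⁺¹) - x)
    have hnorm : ‖star u * u‖ ≤ ‖star ((1 : A⁺¹) - x) * (h : A⁺¹) * ((1 : A⁺¹) - x)‖ := by
      rw [hconj]
      exact CStarAlgebra.norm_le_norm_of_nonneg_of_le hnn hle
    have hcalc : star ((1 : A⁺¹) - x) * (h : A⁺¹) * ((1 : A⁺¹) - x)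
        = cfc (fun t : ℝ => (1 - f t) * (t * (1 - f t))) (h : A⁺¹) := by
      have e1 : (1 : A⁺¹) - x = cfc (fun t : ℝ => 1 - f t) (h : A⁺¹) := by
        rw [cfc_sub (fun _ => (1 : ℝ)) f (h : A⁺¹) (continuousOn_const) (hfc.continuousOn),
          cfc_const_one ℝ (h : A⁺¹) hsa', hxcfc]
      symm
      rw [cfc_mul (fun t : ℝ => 1 - f t) (fun t : ℝ => t * (1 - f t)) (h : A⁺¹)
          ((continuous_const.sub hfc).continuousOn)
          ((continuous_id.mul (continuous_const.sub hfc)).continuousOn),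
        cfc_mul (fun t : ℝ => t) (fun t : ℝ => 1 - f t) (h : A⁺¹)
          continuousOn_id ((continuous_const.sub hfc).continuousOn),
        cfc_id' ℝ (h : A⁺¹) hsa', h1sa.star_eq, e1, mul_assoc]
    have hbound : ‖cfc (fun t : ℝ => (1 - f t) * (t * (1 - f t))) (h : A⁺¹)‖ ≤ 4 * ε := by
      apply norm_cfc_le (by positivity)
      intro t ht
      have ht0 := hspec t ht
      rw [Real.norm_eq_abs]
      exact aux_real_est hε ht0
    have hfin : ‖z - z * x‖ ^ 2 ≤ 4 * ε := by
      rw [hn, hsq]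
      calc ‖star u * u‖ ≤ _ := hnorm
        _ = _ := by rw [hcalc]
        _ ≤ 4 * ε := hbound
    have hlt : ‖z - z * x‖ ^ 2 < δ ^ 2 := lt_of_le_of_lt hfin (by rw [hεdef]; nlinarith)
    exact lt_of_pow_lt_pow_left₀ 2 hδ.le hlt
  refine ⟨cfcₙ g h, ?_, ?_⟩
  · have := key a (by rw [hH']; exact le_add_of_nonneg_right (star_mul_self_nonneg _))
    rwa [← hfactor] at this
  · have := key c (by rw [hH']; exact le_add_of_nonneg_left (star_mul_self_nonneg _))
    rwa [← hfactor] at this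

/-- If `S` is a closed semiregular operator on `A` whose restriction to a closed essential
ideal `K` satisfies `(S|_K)** = S|_K`, then `S**` is the maximal closed semiregular
operator on `A` whose restriction to `K` equals `S|_K`: any semiregular `T` with
`T|_K = S|_K` satisfies `T ⊆ S**`, and `(S**)|_K = S|_K`. -/
theorem stmt_8 {A : Type*} [NonUnitalCStarAlgebra A]
    (K : TwoSidedIdeal A) (hKc : IsClosed (K : Set A)) (hKe : K.Essential)
    (S : UnboundedOp A) (hS : S.Semiregular) (hSc : S.IsClosedOp)
    (hdom : S.adjDomRes2 (K : Set A) = S.dom ∩ (K : Set A))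
    (hfun : ∀ a ∈ S.dom ∩ (K : Set A), S.adjFunRes2 (K : Set A) a = S.toFun a) :
    (∀ T : UnboundedOp A, T.Semiregular →
        T.dom ∩ (K : Set A) = S.dom ∩ (K : Set A) →
        (∀ a ∈ T.dom ∩ (K : Set A), T.toFun a = S.toFun a) →
        T.dom ⊆ S.adjDom2 ∧ ∀ a ∈ T.dom, S.adjFun2 a = T.toFun a) ∧
      S.adjDom2 ∩ (K : Set A) = S.dom ∩ (K : Set A) ∧
      (∀ a ∈ S.dom ∩ (K : Set A), S.adjFun2 a = S.toFun a) := by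
  -- Part 1: maximality
  have part1 : ∀ T : UnboundedOp A,
      T.dom ∩ (K : Set A) = S.dom ∩ (K : Set A) →
      (∀ a ∈ T.dom ∩ (K : Set A), T.toFun a = S.toFun a) →
      ∀ a ∈ T.dom, a ∈ S.adjDom2 ∧ S.adjFun2 a = T.toFun a := by
    intro T hTd hTf a ha
    have key : ∀ b ∈ S.adjDom, star a * S.adjFun b = star (T.toFun a) * b := by
      intro b hb
      have hz : star (S.adjFun b) * a - star b * T.toFun a = 0 := by
        refine hKe _ fun k hk => ?_
        have hak : a * k ∈ T.dom := T.mul_mem a ha k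
        have hakK : a * k ∈ (K : Set A) := K.mul_mem_left a k hk
        have h1 : a * k ∈ S.dom ∩ (K : Set A) := by rw [← hTd]; exact ⟨hak, hakK⟩
        have h2 : T.toFun (a * k) = S.toFun (a * k) := hTf _ ⟨hak, hakK⟩
        have h3 : T.toFun (a * k) = T.toFun a * k := T.map_mul' a ha k
        have h4 := S.aux_adjFun_spec hb _ h1.1
        rw [sub_mul, mul_assoc, mul_assoc, ← h3, h2, h4, sub_self]
      have hz' := congrArg star hz
      rw [star_sub, star_mul, star_mul, star_star, star_star, star_zero] at hz'
      exact sub_eq_zero.mp hz'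
    have hmem : a ∈ S.adjDom2 := ⟨T.toFun a, key⟩
    refine ⟨hmem, ?_⟩
    have h1 := S.aux_adjFun2_spec hmem
    have h2 : S.adjFun2 a - T.toFun a = 0 := by
      refine aux_sep_of_dense hS fun b hb => ?_
      rw [star_sub, sub_mul, ← h1 b hb, ← key b hb, sub_self]
    exact sub_eq_zero.mp h2
  have hSS : ∀ a ∈ S.dom, a ∈ S.adjDom2 ∧ S.adjFun2 a = S.toFun a :=
    part1 S rfl (fun _ _ => rfl)
  refine ⟨fun T _hT hTd hTf =>
      ⟨fun a ha => (part1 T hTd hTf a ha).1, fun a ha => (part1 T hTd hTf a ha).2⟩,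
    ?_, fun a ha => (hSS a ha.1).2⟩
  refine Set.Subset.antisymm ?_ (fun a ha => ⟨(hSS a ha.1).1, ha.2⟩)
  rintro a ⟨ha2, haK⟩
  refine ⟨?_, haK⟩
  set cc := S.adjFun2 a with hccdef
  have hc := S.aux_adjFun2_spec ha2
  -- `star b * cc ∈ K` for every `b`
  have hbc : ∀ b : A, star b * cc ∈ (K : Set A) := by
    have hclosed : IsClosed {b : A | star b * cc ∈ (K : Set A)} :=
      IsClosed.preimage (continuous_star.mul continuous_const) hKc
    have hsub : S.adjDom ⊆ {b : A | star b * cc ∈ (K : Set A)} := by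
      intro b hb
      have hcb := congrArg star (hc b hb)
      rw [star_mul, star_mul, star_star, star_star] at hcb
      show star b * cc ∈ (K : Set A)
      rw [← hcb]
      exact K.mul_mem_left _ a haK
    have hcl := closure_minimal hsub hclosed
    rw [hS.closure_eq] at hcl
    exact fun b => hcl (Set.mem_univ b)
  -- for `k ∈ K`, `a * k ∈ dom S` and `S (a k) = cc * k`
  have hstep : ∀ k ∈ (K : Set A), a * k ∈ S.dom ∧ S.toFun (a * k) = cc * k := by
    intro k hk
    have hmemres2 : a * k ∈ S.adjDomRes2 (K : Set A) := by
      refine ⟨K.mul_mem_left a k hk, cc * k, K.mul_mem_left cc k hk, fun b hb => ?_⟩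
      have hbmem := aux_res_subset_adjDom K hKe S hb
      rw [← hbmem.2, star_mul, star_mul, mul_assoc, mul_assoc, hc b hbmem.1]
    have hdomk : a * k ∈ S.dom ∩ (K : Set A) := by rw [← hdom]; exact hmemres2
    refine ⟨hdomk.1, ?_⟩
    have h5 := (S.aux_adjFunRes2_spec hmemres2).2
    have h6 : S.adjFunRes2 (K : Set A) (a * k) - cc * k = 0 := by
      refine aux_sepRes K hKe S hS fun b hb => ?_
      have hbmem := aux_res_subset_adjDom K hKe S hb
      have e1 : star (a * k) * S.adjFunRes (K : Set A) b = star (cc * k) * b := by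
        rw [← hbmem.2, star_mul, star_mul, mul_assoc, mul_assoc, hc b hbmem.1]
      rw [star_sub, sub_mul, ← h5 b hb, e1, sub_self]
    rw [← hfun _ hdomk]
    exact sub_eq_zero.mp h6
  -- closedness of the graph finishes the proof
  have hcl : (a, cc) ∈ closure {p : A × A | p.1 ∈ S.dom ∧ p.2 = S.toFun p.1} := by
    rw [Metric.mem_closure_iff]
    intro ε hε
    obtain ⟨w, hw1, hw2⟩ := aux_approx a cc hε
    set h0 : A := star a * a + star cc * cc with hh0def
    have hh0K : h0 ∈ (K : Set A) := K.add_mem (K.mul_mem_left (star a) a haK) (hbc cc)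
    have hkK : h0 * w ∈ (K : Set A) := K.mul_mem_right h0 w hh0K
    obtain ⟨hd, he⟩ := hstep _ hkK
    refine ⟨(a * (h0 * w), cc * (h0 * w)), ⟨hd, he.symm⟩, ?_⟩
    rw [Prod.dist_eq]
    exact max_lt (by rw [dist_eq_norm]; exact hw1) (by rw [dist_eq_norm]; exact hw2)
  rw [hSc.closure_eq] at hcl
  exact hcl.1
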